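/- For a strictly convex differentiable function f : ℝ^p → ℝ and A, b defining feasible equality constraints, a point x with Ax = b is the unique minimizer of f over {z : Az = b} if and only if there exists ν ∈ ℝ^q with ∇f(x) + Aᵀν = 0. -/

import Mathlib

open InnerProductSpace Matrix

lemma convex_first_order {E : Type*} [NormedAddCommGroup E] [InnerProductSpace ℝ E]
    [CompleteSpace E] {f : E → ℝ} {gx : E} {x : E}
    (hf : ConvexOn ℝ Set.univ f) (hg : HasGradientAt f gx x) (y : E) :
    f x + inner ℝ gx (y - x) ≤ f y := by
  rcases eq_or_ne y x with rfl | hne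
  · simp
  · set γ : ℝ → E := fun t => t • (y - x) + x with hγdef
    have hγ : HasDerivAt γ (y - x) 0 := by
      have h := ((hasDerivAt_id (0:ℝ)).smul_const (y - x)).add_const x
      rw [one_smul] at h
      exact h
    have hL : HasFDerivAt f (toDual ℝ E gx) x := hasGradientAt_iff_hasFDerivAt.mp hg
    have hcomp : HasDerivAt (f ∘ γ) (inner ℝ gx (y - x) : ℝ) 0 := by
      have h0 : HasFDerivAt f (toDual ℝ E gx) (γ 0) := by simpa [hγdef] using hL
      simpa [toDual_apply_apply] using h0.comp_hasDerivAt (x := (0:ℝ)) hγ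
    have hφ : ConvexOn ℝ Set.univ (f ∘ γ) := by
      have : ConvexOn ℝ ((AffineMap.lineMap x y : ℝ →ᵃ[ℝ] E) ⁻¹' Set.univ)
          (f ∘ (AffineMap.lineMap x y : ℝ →ᵃ[ℝ] E)) := hf.comp_affineMap _
      simp only [Set.preimage_univ] at this
      convert this using 2
      funext t
      simp only [hγdef, AffineMap.lineMap_apply_module']
    have := hφ.le_slope_of_hasDerivAt (Set.mem_univ 0) (Set.mem_univ 1) zero_lt_one hcomp
    simp [slope, hγdef, Function.comp] at this
    linarith

/-- For a differentiable strictly convex `f`, a feasible point `x` (with `A x = b`) is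
the unique minimizer of `f` over `{z | A z = b}` iff there is a multiplier `ν` with
`∇f x + Aᵀ ν = 0`. -/
theorem optimality_condition (p q : ℕ)
    (f : EuclideanSpace ℝ (Fin p) → ℝ)
    (g : EuclideanSpace ℝ (Fin p) → EuclideanSpace ℝ (Fin p))
    (hgrad : ∀ z, HasGradientAt f (g z) z)
    (hconv : StrictConvexOn ℝ Set.univ f)
    (A : Matrix (Fin q) (Fin p) ℝ) (b : Fin q → ℝ)
    (hfeas : ∃ z : EuclideanSpace ℝ (Fin p), A.mulVec z = b)
    (x : EuclideanSpace ℝ (Fin p)) (hx : A.mulVec x = b) :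
    ((∀ z : EuclideanSpace ℝ (Fin p), A.mulVec z = b → f x ≤ f z) ∧
     (∀ z : EuclideanSpace ℝ (Fin p), A.mulVec z = b → f z ≤ f x → z = x)) ↔
      ∃ ν : Fin q → ℝ, ∀ i, g x i + A.transpose.mulVec ν i = 0 := by
  have hcv : ConvexOn ℝ Set.univ f := hconv.convexOn
  -- uniqueness follows from minimality and strict convexity
  have huniq : (∀ z : EuclideanSpace ℝ (Fin p), A.mulVec z = b → f x ≤ f z) →
      ∀ z : EuclideanSpace ℝ (Fin p), A.mulVec z = b → f z ≤ f x → z = x := by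
    intro hmin z hz hfz
    by_contra hne
    have hm : A.mulVec ((1/2 : ℝ) • z + (1/2 : ℝ) • x) = b := by
      rw [Matrix.mulVec_add, Matrix.mulVec_smul, Matrix.mulVec_smul, hz, hx, ← add_smul]
      norm_num
    have hlt := hconv.2 (Set.mem_univ z) (Set.mem_univ x) hne
      (by norm_num : (0:ℝ) < 1/2) (by norm_num : (0:ℝ) < 1/2) (by norm_num)
    have hge := hmin ((1/2 : ℝ) • z + (1/2 : ℝ) • x) (by simpa using hm)
    simp only [smul_eq_mul] at hlt
    linarith
  constructor
  · rintro ⟨hmin, -⟩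
    -- stationarity along the kernel of A
    have hstat : ∀ v : EuclideanSpace ℝ (Fin p), A.mulVec v = 0 →
        (inner ℝ (g x) v : ℝ) = 0 := by
      intro v hv
      have hγ : HasDerivAt (fun t : ℝ => x + t • v) v 0 := by
        simpa using ((hasDerivAt_id (0:ℝ)).smul_const v).const_add x
      have hL : HasFDerivAt f (toDual ℝ _ (g x)) x :=
        hasGradientAt_iff_hasFDerivAt.mp (hgrad x)
      have h0 : HasFDerivAt f (toDual ℝ _ (g x)) ((fun t : ℝ => x + t • v) 0) := by
        simpa using hL
      have hder : HasDerivAt (fun t : ℝ => f (x + t • v)) (inner ℝ (g x) v : ℝ) 0 := by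
        have h := h0.comp_hasDerivAt (x := (0:ℝ)) hγ
        rw [toDual_apply_apply] at h
        exact h
      have hlm : IsLocalMin (fun t : ℝ => f (x + t • v)) 0 := by
        apply Filter.Eventually.of_forall
        intro t
        have hfeas' : A.mulVec (x + t • v) = b := by
          rw [Matrix.mulVec_add, Matrix.mulVec_smul, hx, hv, smul_zero, add_zero]
        simpa using hmin _ hfeas'
      exact hlm.hasDerivAt_eq_zero hder
    -- hence g x lies in the range of Aᵀ
    set S : Submodule ℝ (EuclideanSpace ℝ (Fin p)) :=
      LinearMap.range (Matrix.toEuclideanLin Aᵀ) with hS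
    have hmem : g x ∈ S := by
      rw [← Submodule.orthogonal_orthogonal S, Submodule.mem_orthogonal]
      intro u hu
      have hAu : A.mulVec u = 0 := by
        funext i
        have h1 := (Submodule.mem_orthogonal S u).mp hu
          (Matrix.toEuclideanLin Aᵀ ((EuclideanSpace.equiv (Fin q) ℝ).symm (Pi.single i 1)))
          ⟨_, rfl⟩
        have h2 : (Aᵀ.mulVec (Pi.single i 1)) ⬝ᵥ u = 0 := by
          simpa [PiLp.inner_apply, Matrix.toEuclideanLin_apply, dotProduct, mul_comm] using h1
        rw [Matrix.mulVec_transpose, ← dotProduct_mulVec,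
          single_dotProduct, one_mul] at h2
        simpa using h2
      have h3 := hstat u hAu
      rw [real_inner_comm] at h3
      exact h3
    obtain ⟨ν', hν'⟩ := hmem
    refine ⟨-ν', fun i => ?_⟩
    have h4 : Aᵀ.mulVec ν' i = g x i := by
      have := congrFun (congrArg (WithLp.equiv 2 (Fin p → ℝ)) hν') i
      simpa [Matrix.toEuclideanLin_apply] using this
    rw [Matrix.mulVec_neg]
    simp [h4]
  · rintro ⟨ν, hν⟩
    have hmin : ∀ z : EuclideanSpace ℝ (Fin p), A.mulVec z = b → f x ≤ f z := by
      intro z hz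
      have hAzx : A.mulVec (z - x) = 0 := by
        rw [Matrix.mulVec_sub, hz, hx, sub_self]
      have hkey : (inner ℝ (g x) (z - x) : ℝ) = 0 := by
        have hg' : ∀ i, g x i = -(Aᵀ.mulVec ν i) := fun i => by
          have := hν i; linarith
        calc (inner ℝ (g x) (z - x) : ℝ)
            = ∑ i, g x i * (z - x) i := by
              simp [PiLp.inner_apply, mul_comm]
          _ = -((Aᵀ.mulVec ν) ⬝ᵥ (z - x)) := by
              rw [dotProduct, ← Finset.sum_neg_distrib]
              refine Finset.sum_congr rfl fun i _ => ?_
              rw [hg' i]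
              simp
          _ = -(ν ⬝ᵥ A.mulVec (z - x)) := by
              rw [Matrix.mulVec_transpose, ← dotProduct_mulVec]
          _ = 0 := by rw [hAzx, dotProduct_zero, neg_zero]
      have := convex_first_order hcv (hgrad x) z
      rw [hkey] at this
      linarith
    exact ⟨hmin, huniq hmin⟩
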